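/- Let d ≥ 2, let LN denote layer normalization on ℝ^d and LS layer scaling on ℝ^{d−1}. Then there exist linear maps φ₁: ℝ^{d−1} → ℝ^d and φ₂: ℝ^d → ℝ^{d−1} such that LS = φ₂ ∘ LN ∘ φ₁ on all of ℝ^{d−1}, and there exist linear maps φ₁*: ℝ^d → ℝ^{d−1} and φ₂*: ℝ^{d−1} → ℝ^d such that LN = φ₂* ∘ LS ∘ φ₁* on all of ℝ^d. -/

import Mathlib

/-- Layer normalization on `ℝ^n`: `LN(h)ⱼ = (hⱼ − μ)/σ` when `σ ≠ 0`, and `0` when `σ = 0`. -/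
noncomputable def LN {n : ℕ} (h : Fin n → ℝ) : Fin n → ℝ :=
  let μ : ℝ := (∑ i, h i) / n
  let σ : ℝ := Real.sqrt ((∑ i, (h i - μ) ^ 2) / n)
  if σ = 0 then 0 else fun j => (h j - μ) / σ

/-- Layer scaling (RMSNorm) on `ℝ^n`: `LS(h) = h/σ̃(h)` when `σ̃(h) ≠ 0`, and `0` otherwise. -/
noncomputable def LS {n : ℕ} (h : Fin n → ℝ) : Fin n → ℝ :=
  let σ : ℝ := Real.sqrt ((∑ i, (h i) ^ 2) / n)
  if σ = 0 then 0 else fun j => h j / σ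

noncomputable def Lsum (d : ℕ) : EuclideanSpace ℝ (Fin d) →ₗ[ℝ] ℝ where
  toFun x := ∑ i, x i
  map_add' x y := by simp [Finset.sum_add_distrib]
  map_smul' c x := by simp [Finset.mul_sum]

def onesE (d : ℕ) : EuclideanSpace ℝ (Fin d) := WithLp.toLp 2 (fun _ => 1)

lemma finrank_ker_Lsum (d : ℕ) (hd : 2 ≤ d) :
    Module.finrank ℝ (LinearMap.ker (Lsum d)) = d - 1 := by
  have hsurj : Function.Surjective (Lsum d) := by
    intro r
    refine ⟨(WithLp.equiv 2 _).symm fun _ => r / d, ?_⟩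
    have hd0 : (d:ℝ) ≠ 0 := by positivity
    simp [Lsum, Finset.sum_const, hd0]
    field_simp
  have h1 := LinearMap.finrank_range_add_finrank_ker (Lsum d)
  rw [LinearMap.range_eq_top.mpr hsurj] at h1
  simp [finrank_euclideanSpace_fin] at h1
  omega

noncomputable def centerL (d : ℕ) : EuclideanSpace ℝ (Fin d) →ₗ[ℝ] LinearMap.ker (Lsum d) := by
  refine LinearMap.codRestrict _
    { toFun := fun x => x - ((∑ i, x i) / d) • onesE d,
      map_add' := ?_, map_smul' := ?_ } ?_
  · intro x y
    ext j
    show (x j + y j) - _ * _ = (x j - _ * _) + (y j - _ * _)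
    simp [PiLp.smul_apply, onesE, Finset.sum_add_distrib]
    ring
  · intro c x
    ext j
    show (c * x j) - _ = c * (x j - _)
    simp only [Equiv.toFun_as_coe, WithLp.equiv_apply, PiLp.smul_apply, onesE, smul_eq_mul, mul_one, PiLp.toLp_apply]
    rw [← Finset.mul_sum]
    ring
  · intro x
    simp only [LinearMap.mem_ker, Lsum, LinearMap.coe_mk, AddHom.coe_mk]
    show ∑ i, (x i - (∑ i, x i)/d * onesE d i) = 0
    by_cases hd : (d:ℝ) = 0
    · have : d = 0 := by exact_mod_cast hd
      subst this; simp
    · simp [PiLp.smul_apply, onesE, Finset.sum_sub_distrib, Finset.sum_const]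
      field_simp
      simp

lemma centerL_coe (d : ℕ) (x : EuclideanSpace ℝ (Fin d)) (i : Fin d) :
    ((centerL d x : EuclideanSpace ℝ (Fin d)) : Fin d → ℝ) i = x i - (∑ j, x j) / d := by
  show x i - (∑ j, x j)/d * onesE d i = _
  simp [onesE]

lemma sum_sq_eq_normsq {n : ℕ} (v : EuclideanSpace ℝ (Fin n)) :
    ∑ i, v i ^ 2 = ‖v‖ ^ 2 := by
  rw [EuclideanSpace.norm_eq, Real.sq_sqrt (by positivity)]
  simp [sq_abs]

lemma sum_sq_pos {n : ℕ} (v : Fin n → ℝ) (hv : v ≠ 0) : 0 < ∑ i, v i ^ 2 := by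
  obtain ⟨i, hi⟩ : ∃ i, v i ≠ 0 := by
    by_contra hc; push_neg at hc; exact hv (funext hc)
  exact Finset.sum_pos' (fun j _ => sq_nonneg _)
    ⟨i, Finset.mem_univ i, by positivity⟩

lemma scal_key (S a b : ℝ) (hS : 0 < S) (ha : 0 < a) (hb : 0 < b) :
    (Real.sqrt (S / a))⁻¹ * (Real.sqrt b / Real.sqrt a) = (Real.sqrt (S / b))⁻¹ := by
  rw [Real.sqrt_div hS.le, Real.sqrt_div hS.le]
  have h1 : Real.sqrt S ≠ 0 := by positivity
  have h2 : Real.sqrt a ≠ 0 := by positivity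
  have h3 : Real.sqrt b ≠ 0 := by positivity
  field_simp


/-- `LS` on `ℝ^{d−1}` factors through `LN` on `ℝ^d` via linear maps, and conversely `LN` on
`ℝ^d` factors through `LS` on `ℝ^{d−1}` via linear maps. -/
theorem LS_factors_LN_and_LN_factors_LS (d : ℕ) (hd : 2 ≤ d) :
    (∃ (φ₁ : (Fin (d - 1) → ℝ) →ₗ[ℝ] (Fin d → ℝ))
       (φ₂ : (Fin d → ℝ) →ₗ[ℝ] (Fin (d - 1) → ℝ)),
       ∀ x : Fin (d - 1) → ℝ, φ₂ (LN (φ₁ x)) = LS x) ∧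
    (∃ (ψ₁ : (Fin d → ℝ) →ₗ[ℝ] (Fin (d - 1) → ℝ))
       (ψ₂ : (Fin (d - 1) → ℝ) →ₗ[ℝ] (Fin d → ℝ)),
       ∀ x : Fin d → ℝ, ψ₂ (LS (ψ₁ x)) = LN x) := by
  have hd0 : (0:ℝ) < d := by positivity
  have hm0 : (0:ℝ) < ((d - 1 : ℕ) : ℝ) := by
    have : 1 ≤ d - 1 := by omega
    exact_mod_cast Nat.lt_of_lt_of_le Nat.zero_lt_one this
  set K := LinearMap.ker (Lsum d) with hK
  have hrank : Module.finrank ℝ K = d - 1 := finrank_ker_Lsum d hd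
  let b : OrthonormalBasis (Fin (d - 1)) ℝ K :=
    (stdOrthonormalBasis ℝ K).reindex (finCongr hrank)
  let qE := WithLp.linearEquiv 2 ℝ (Fin d → ℝ)
  let qF := WithLp.linearEquiv 2 ℝ (Fin (d - 1) → ℝ)
  let φ₁ : (Fin (d - 1) → ℝ) →ₗ[ℝ] (Fin d → ℝ) :=
    qE.toLinearMap ∘ₗ K.subtype ∘ₗ b.repr.symm.toLinearEquiv.toLinearMap ∘ₗ qF.symm.toLinearMap
  let Ψ : (Fin d → ℝ) →ₗ[ℝ] (Fin (d - 1) → ℝ) :=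
    qF.toLinearMap ∘ₗ b.repr.toLinearEquiv.toLinearMap ∘ₗ centerL d ∘ₗ qE.symm.toLinearMap
  let φ₂ : (Fin d → ℝ) →ₗ[ℝ] (Fin (d - 1) → ℝ) :=
    (Real.sqrt ((d-1:ℕ)) / Real.sqrt d) • Ψ
  let ψ₂ : (Fin (d - 1) → ℝ) →ₗ[ℝ] (Fin d → ℝ) :=
    (Real.sqrt d / Real.sqrt ((d-1:ℕ))) • φ₁
  constructor
  · refine ⟨φ₁, φ₂, fun x => ?_⟩
    by_cases hx : x = 0
    · subst hx
      simp [LN, LS]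
    · set v : K := b.repr.symm (qF.symm x) with hv
      have hφ₁x : φ₁ x = fun j => (v : EuclideanSpace ℝ (Fin d)) j := rfl
      have hsum : ∑ i, φ₁ x i = 0 := by
        have := v.2
        rw [LinearMap.mem_ker] at this
        exact this
      set S := ∑ i, x i ^ 2 with hS
      have hSpos : 0 < S := sum_sq_pos x hx
      have hsumsq : ∑ i, φ₁ x i ^ 2 = S := by
        rw [hφ₁x]
        calc ∑ i, (v : EuclideanSpace ℝ (Fin d)) i ^ 2
            = ‖(v : EuclideanSpace ℝ (Fin d))‖^2 := sum_sq_eq_normsq _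
          _ = ‖v‖^2 := by rw [Submodule.norm_coe]
          _ = ‖qF.symm x‖^2 := by rw [hv, LinearIsometryEquiv.norm_map]
          _ = S := (sum_sq_eq_normsq (qF.symm x)).symm
      have hμ : (∑ i, φ₁ x i) / d = 0 := by rw [hsum]; simp
      rw [LN, LS]
      simp only [hμ, sub_zero, hsumsq, ← hS]
      rw [if_neg (show ¬ Real.sqrt (S / d) = 0 from by positivity),
          if_neg (show ¬ Real.sqrt (S / ((d-1:ℕ):ℝ)) = 0 from by positivity)]
      have hfun : (fun j => φ₁ x j / Real.sqrt (S / d))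
          = (Real.sqrt (S / d))⁻¹ • φ₁ x := by
        funext j; simp [div_eq_inv_mul]
      rw [hfun, map_smul]
      have hc : centerL d ((v : EuclideanSpace ℝ (Fin d))) = v := by
        apply Subtype.ext
        ext i
        rw [centerL_coe]
        rw [show (∑ j, (v : EuclideanSpace ℝ (Fin d)) j) = 0 from hsum]
        simp
      have hΨφ : Ψ (φ₁ x) = x := by
        have h1 : Ψ (φ₁ x) = qF (b.repr (centerL d (v : EuclideanSpace ℝ (Fin d)))) := rfl
        rw [h1, hc, hv]
        simp
      have hφ₂ : φ₂ (φ₁ x) = (Real.sqrt ((d-1:ℕ)) / Real.sqrt d) • x := by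
        show (Real.sqrt ((d-1:ℕ)) / Real.sqrt d) • Ψ (φ₁ x) = _
        rw [hΨφ]
      rw [hφ₂, smul_smul, scal_key S _ _ hSpos hd0 hm0]
      funext j
      simp [div_eq_inv_mul]
  · refine ⟨Ψ, ψ₂, fun x => ?_⟩
    set w : K := centerL d (qE.symm x) with hw
    have hwcoe : ∀ i, (w : EuclideanSpace ℝ (Fin d)) i = x i - (∑ j, x j) / d :=
      fun i => centerL_coe d (qE.symm x) i
    have hΨx : Ψ x = fun j => (b.repr w) j := rfl
    by_cases hy : (fun i => x i - (∑ j, x j) / d) = (0 : Fin d → ℝ)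
    · have hyy : ∀ i, x i - (∑ j, x j) / d = 0 := fun i => congrFun hy i
      have hw0 : w = 0 := by
        apply Subtype.ext
        ext i
        rw [hwcoe i, hyy i]
        rfl
      have hΨ0 : Ψ x = 0 := by rw [hΨx, hw0]; funext j; simp
      rw [hΨ0]
      rw [LN]
      simp only [hyy]
      simp [LS]
    · set S := ∑ i, (x i - (∑ j, x j) / d) ^ 2 with hS
      have hSpos : 0 < S := sum_sq_pos _ hy
      have hsumsq : ∑ i, Ψ x i ^ 2 = S := by
        rw [hΨx]
        calc ∑ i, (b.repr w) i ^ 2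
            = ‖b.repr w‖^2 := sum_sq_eq_normsq _
          _ = ‖w‖^2 := by rw [LinearIsometryEquiv.norm_map]
          _ = ‖(w : EuclideanSpace ℝ (Fin d))‖^2 := by rw [Submodule.norm_coe]
          _ = ∑ i, (w : EuclideanSpace ℝ (Fin d)) i ^ 2 := (sum_sq_eq_normsq _).symm
          _ = S := by rw [hS]; exact Finset.sum_congr rfl fun i _ => by rw [hwcoe i]
      rw [LN, LS]
      simp only [hsumsq, ← hS]
      rw [if_neg (show ¬ Real.sqrt (S / ((d-1:ℕ):ℝ)) = 0 from by positivity),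
          if_neg (show ¬ Real.sqrt (S / d) = 0 from by positivity)]
      have hfun : (fun j => Ψ x j / Real.sqrt (S / ((d-1:ℕ):ℝ)))
          = (Real.sqrt (S / ((d-1:ℕ):ℝ)))⁻¹ • Ψ x := by
        funext j; simp [div_eq_inv_mul]
      rw [hfun, map_smul]
      have hφΨ : φ₁ (Ψ x) = fun j => (w : EuclideanSpace ℝ (Fin d)) j := by
        have h1 : φ₁ (Ψ x)
            = fun j => ((b.repr.symm (b.repr w) : K) : EuclideanSpace ℝ (Fin d)) j := rfl
        rw [h1, LinearIsometryEquiv.symm_apply_apply]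
      have hψ₂ : ψ₂ (Ψ x) = (Real.sqrt d / Real.sqrt ((d-1:ℕ))) • fun j => (w : EuclideanSpace ℝ (Fin d)) j := by
        show (Real.sqrt d / Real.sqrt ((d-1:ℕ))) • φ₁ (Ψ x) = _
        rw [hφΨ]
      rw [hψ₂, smul_smul, scal_key S _ _ hSpos hm0 hd0]
      funext j
      simp [div_eq_inv_mul, hwcoe j]
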